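/- For all nonnegative integers r, s and every complex number a such that a ≠ 0, (a−r+1)_k ≠ 0 for 0 ≤ k ≤ r, and (1−a)_s ≠ 0, one has Σ_{k=0}^{r} (−r)_k (1+k)_s / ((a−r+1)_k · s!) = ((a−r)/a) · (1−a+r)_s / (1−a)_s. -/

import Mathlib

/-- The Pochhammer symbol (rising factorial) `(a)ₖ = a(a+1)⋯(a+k−1)`. -/
noncomputable def poch (a : ℂ) (k : ℕ) : ℂ := (ascPochhammer ℂ k).eval a

lemma poch_zero (x : ℂ) : poch x 0 = 1 := by simp [poch]

lemma poch_succ_right (x : ℂ) (n : ℕ) : poch x (n + 1) = poch x n * (x + n) :=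
  ascPochhammer_succ_eval n x

lemma poch_succ_left (x : ℂ) (n : ℕ) : poch x (n + 1) = x * poch (x + 1) n := by
  simp [poch, ascPochhammer_succ_left, Polynomial.eval_comp]

lemma poch_add (x : ℂ) (n m : ℕ) : poch x (n + m) = poch x n * poch (x + n) m := by
  have h := congrArg (Polynomial.eval x) (ascPochhammer_mul (S := ℂ) n m)
  simpa [poch, Polynomial.eval_comp] using h.symm

lemma poch_neg_one_pow (x : ℂ) (s : ℕ) : poch (1 - x) s = (-1) ^ s * poch (x - s) s := by
  induction s with
  | zero => simp [poch_zero]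
  | succ s ih =>
    rw [poch_succ_right, ih]
    have h : poch (x - ((s + 1 : ℕ) : ℂ)) (s + 1)
        = (x - ((s + 1 : ℕ) : ℂ)) * poch ((x - ((s + 1 : ℕ) : ℂ)) + 1) s :=
      poch_succ_left _ _
    rw [h, show (x - ((s + 1 : ℕ) : ℂ)) + 1 = x - (s : ℂ) by push_cast; ring]
    push_cast
    ring

lemma poch_nat_factorial (n m : ℕ) : poch (1 + n) m * (n.factorial : ℂ) = ((n + m).factorial : ℂ) := by
  induction m with
  | zero => simp [poch_zero]
  | succ m ih =>
    rw [poch_succ_right, show (n + (m + 1)) = (n + m) + 1 by ring, Nat.factorial_succ]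
    push_cast
    linear_combination ((1 : ℂ) + n + m) * ih

lemma poch_neg_nat_split (r k : ℕ) :
    poch (-(r : ℂ) - 1) k = poch (-(r : ℂ)) k - k * poch (-(r : ℂ)) (k - 1) := by
  cases k with
  | zero => simp [poch_zero]
  | succ k =>
    simp only [Nat.add_sub_cancel]
    rw [poch_succ_left, poch_succ_right]
    rw [show (-(r : ℂ) - 1 + 1) = -(r : ℂ) by ring]
    push_cast
    ring

lemma key (r : ℕ) : ∀ (s : ℕ) (a : ℂ),
    ∑ k ∈ Finset.range (r + 1),
      poch (-(r : ℂ)) k * poch ((s : ℂ) + 1) k / (k.factorial : ℂ) * poch (a - r + 1 + k) (r - k)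
      = poch (a - r - s) r := by
  induction r with
  | zero => intro s a; simp [poch_zero]
  | succ r ih =>
    intro s a
    have split : ∀ k ∈ Finset.range (r + 2),
        poch (-(((r + 1 : ℕ)) : ℂ)) k * poch ((s : ℂ) + 1) k / (k.factorial : ℂ)
            * poch (a - (r + 1 : ℕ) + 1 + k) ((r + 1) - k)
        = poch (-(r : ℂ)) k * poch ((s : ℂ) + 1) k / (k.factorial : ℂ)
            * poch (a - (r + 1 : ℕ) + 1 + k) ((r + 1) - k)
          - (k : ℂ) * poch (-(r : ℂ)) (k - 1) * poch ((s : ℂ) + 1) k / (k.factorial : ℂ)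
            * poch (a - (r + 1 : ℕ) + 1 + k) ((r + 1) - k) := by
      intro k _
      have h := poch_neg_nat_split r k
      rw [show (-(((r + 1 : ℕ)) : ℂ)) = -(r : ℂ) - 1 by push_cast; ring, h]
      ring
    rw [Finset.sum_congr rfl split, Finset.sum_sub_distrib]
    -- A part
    have hA : ∑ k ∈ Finset.range (r + 2),
        poch (-(r : ℂ)) k * poch ((s : ℂ) + 1) k / (k.factorial : ℂ)
          * poch (a - (r + 1 : ℕ) + 1 + k) ((r + 1) - k)
        = a * poch (a - 1 - r - s) r := by
      rw [Finset.sum_range_succ]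
      have hlast : poch (-(r : ℂ)) (r + 1) = 0 := by
        rw [poch_succ_right]; simp
      rw [hlast]
      simp only [zero_mul, zero_div, add_zero, mul_zero, zero_mul]
      have hterm : ∀ k ∈ Finset.range (r + 1),
          poch (-(r : ℂ)) k * poch ((s : ℂ) + 1) k / (k.factorial : ℂ)
            * poch (a - (r + 1 : ℕ) + 1 + k) ((r + 1) - k)
          = a * (poch (-(r : ℂ)) k * poch ((s : ℂ) + 1) k / (k.factorial : ℂ)
            * poch ((a - 1) - r + 1 + k) (r - k)) := by
        intro k hk
        have hk' : k ≤ r := Nat.lt_succ_iff.mp (Finset.mem_range.mp hk)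
        have h1 : (r + 1) - k = (r - k) + 1 := by omega
        have h2 : poch (a - (r + 1 : ℕ) + 1 + k) ((r - k) + 1)
            = poch (a - (r + 1 : ℕ) + 1 + k) (r - k) * a := by
          rw [poch_succ_right]
          congr 1
          have : ((r - k : ℕ) : ℂ) = (r : ℂ) - k := by
            push_cast [Nat.cast_sub hk']; ring
          rw [this]; push_cast; ring
        rw [h1, h2]
        have h3 : (a - (r + 1 : ℕ) + 1 + k : ℂ) = (a - 1) - r + 1 + k := by push_cast; ring
        rw [h3]; ring
      rw [Finset.sum_congr rfl hterm, ← Finset.mul_sum, ih s (a - 1)]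
    -- B part
    have hB : ∑ k ∈ Finset.range (r + 2),
        (k : ℂ) * poch (-(r : ℂ)) (k - 1) * poch ((s : ℂ) + 1) k / (k.factorial : ℂ)
          * poch (a - (r + 1 : ℕ) + 1 + k) ((r + 1) - k)
        = ((s : ℂ) + 1) * poch (a - r - (s + 1)) r := by
      rw [Finset.sum_range_succ']
      simp only [Nat.cast_zero, zero_mul, zero_div, add_zero, mul_zero, zero_mul]
      have hterm : ∀ k ∈ Finset.range (r + 1),
          ((k + 1 : ℕ) : ℂ) * poch (-(r : ℂ)) ((k + 1) - 1) * poch ((s : ℂ) + 1) (k + 1)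
              / ((k + 1).factorial : ℂ)
            * poch (a - (r + 1 : ℕ) + 1 + (k + 1 : ℕ)) ((r + 1) - (k + 1))
          = ((s : ℂ) + 1) * (poch (-(r : ℂ)) k * poch (((s : ℂ) + 1) + 1) k / (k.factorial : ℂ)
            * poch (a - r + 1 + k) (r - k)) := by
        intro k hk
        have h1 : (k + 1) - 1 = k := rfl
        have h2 : (r + 1) - (k + 1) = r - k := by omega
        have h3 : poch ((s : ℂ) + 1) (k + 1) = ((s : ℂ) + 1) * poch ((s : ℂ) + 2) k := by
          rw [poch_succ_left]; ring_nf
        have h4 : ((k + 1).factorial : ℂ) = ((k : ℂ) + 1) * (k.factorial : ℂ) := by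
          rw [Nat.factorial_succ]; push_cast; ring
        have h5 : (a - (r + 1 : ℕ) + 1 + ((k + 1 : ℕ) : ℂ)) = a - r + 1 + k := by push_cast; ring
        have hne : ((k : ℂ) + 1) ≠ 0 := Nat.cast_add_one_ne_zero k
        have hkf : (k.factorial : ℂ) ≠ 0 := by
          exact_mod_cast Nat.cast_ne_zero.mpr (Nat.factorial_ne_zero k)
        rw [h1, h2, h3, h4, h5]
        rw [show ((s : ℂ) + 1) + 1 = (s : ℂ) + 2 by ring]
        field_simp
        push_cast; ring
      rw [Finset.sum_congr rfl hterm, ← Finset.mul_sum]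
      congr 1
      have := ih (s + 1) a
      rw [show (((s + 1 : ℕ) : ℂ) + 1) = ((s : ℂ) + 1) + 1 by push_cast; ring] at this
      rw [show (a - (r : ℂ) - ((s + 1 : ℕ) : ℂ)) = a - (r : ℂ) - ((s : ℂ) + 1) by push_cast; ring] at this
      exact this
    rw [hA, hB]
    have goalr : poch (a - ((r + 1 : ℕ) : ℂ) - s) (r + 1)
        = poch (a - 1 - r - s) r * (a - s - 1) := by
      rw [show (a - ((r + 1 : ℕ) : ℂ) - s) = a - 1 - (r : ℂ) - s by push_cast; ring]
      rw [poch_succ_right]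
      ring_nf
    rw [goalr]
    rw [show (a - (r : ℂ) - ((s : ℂ) + 1)) = a - 1 - r - s by ring]
    ring

theorem finite_sum_inverse_argument (r s : ℕ) (a : ℂ) (ha : a ≠ 0)
    (h1 : ∀ k ≤ r, poch (a - r + 1) k ≠ 0) (h2 : poch (1 - a) s ≠ 0) :
    ∑ k ∈ Finset.range (r + 1),
      poch (-(r : ℂ)) k * poch (1 + k) s / (poch (a - r + 1) k * (s.factorial : ℂ)) =
    ((a - r) / a) * (poch (1 - a + r) s / poch (1 - a) s) := by
  have hR : poch (a - r + 1) r ≠ 0 := h1 r le_rfl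
  have hsum : ∑ k ∈ Finset.range (r + 1),
      poch (-(r : ℂ)) k * poch (1 + k) s / (poch (a - r + 1) k * (s.factorial : ℂ))
      = poch (a - r - s) r / poch (a - r + 1) r := by
    rw [eq_div_iff hR, Finset.sum_mul]
    have hterm : ∀ k ∈ Finset.range (r + 1),
        poch (-(r : ℂ)) k * poch (1 + k) s / (poch (a - r + 1) k * (s.factorial : ℂ))
          * poch (a - r + 1) r
        = poch (-(r : ℂ)) k * poch ((s : ℂ) + 1) k / (k.factorial : ℂ)
          * poch (a - r + 1 + k) (r - k) := by
      intro k hk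
      have hk' : k ≤ r := Nat.lt_succ_iff.mp (Finset.mem_range.mp hk)
      have hsplit : poch (a - r + 1) r = poch (a - r + 1) k * poch (a - r + 1 + k) (r - k) := by
        rw [← poch_add]
        congr 1
        omega
      have hcomm : poch (1 + k) s * (k.factorial : ℂ) = poch ((s : ℂ) + 1) k * (s.factorial : ℂ) := by
        rw [show ((s : ℂ) + 1) = 1 + (s : ℂ) by ring]
        rw [show (1 + (k : ℂ)) = 1 + ((k : ℕ) : ℂ) by norm_num]
        rw [poch_nat_factorial, poch_nat_factorial, Nat.add_comm]
      have hk0 : poch (a - r + 1) k ≠ 0 := h1 k hk'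
      have hkf : (k.factorial : ℂ) ≠ 0 := Nat.cast_ne_zero.mpr (Nat.factorial_ne_zero k)
      have hsf : (s.factorial : ℂ) ≠ 0 := Nat.cast_ne_zero.mpr (Nat.factorial_ne_zero s)
      rw [hsplit]
      field_simp
      linear_combination (poch (-(r : ℂ)) k
        * poch (a - r + 1 + k) (r - k)) * hcomm
    rw [Finset.sum_congr rfl hterm, key r s a]
  rw [hsum]
  -- Now prove poch (a - r - s) r / poch (a - r + 1) r = ((a - r)/a) * (poch (1-a+r) s / poch (1-a) s)
  have hs1 : poch (1 - a) s = (-1 : ℂ) ^ s * poch (a - s) s := poch_neg_one_pow a s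
  have hs2 : poch (1 - a + r) s = (-1 : ℂ) ^ s * poch (a - r - s) s := by
    have := poch_neg_one_pow (a - r) s
    rw [show (1 - (a - (r : ℂ))) = 1 - a + r by ring] at this
    rw [show ((a - (r : ℂ)) - s) = a - r - s by ring] at this
    exact this
  have hmone : ((-1 : ℂ) ^ s) ≠ 0 := pow_ne_zero s (by norm_num)
  have hAs : poch (a - s) s ≠ 0 := by
    intro h; apply h2; rw [hs1, h, mul_zero]
  -- key algebraic identity
  have hid : poch (a - r - s) r * (poch (a - s) s * a)
      = poch (a - r - s) s * ((a - r) * poch (a - r + 1) r) := by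
    have e1 : poch (a - r - s) (r + (s + 1)) = poch (a - r - s) r * poch (a - s) (s + 1) := by
      rw [poch_add, show (a - (r : ℂ) - s + (r : ℂ)) = a - s by push_cast; ring]
    have e2 : poch (a - r - s) (s + (r + 1)) = poch (a - r - s) s * poch (a - r) (r + 1) := by
      rw [poch_add, show (a - (r : ℂ) - s + (s : ℂ)) = a - r by push_cast; ring]
    have e3 : poch (a - s) (s + 1) = poch (a - s) s * a := by
      rw [poch_succ_right, show (a - (s : ℂ) + (s : ℂ)) = a by ring]
    have e4 : poch (a - r) (r + 1) = (a - r) * poch (a - r + 1) r := poch_succ_left _ _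
    rw [← e3, ← e4, ← e1, ← e2, show r + (s + 1) = s + (r + 1) by omega]
  rw [hs1, hs2]
  field_simp
  linear_combination hid
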